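/- If φ is an autarky for a clause-set F, then F is satisfiable if and only if the clause-set φ * F (the result of applying φ to F) is satisfiable. -/

import Mathlib

open scoped Classical

noncomputable section

abbrev Var : Type := ℕ
abbrev Lit : Type := Var × Bool
abbrev Clause : Type := Finset Lit
abbrev ClauseSet : Type := Finset Clause

/-- A proper clause contains no complementary pair of literals. -/
def isClause (C : Clause) : Prop := ∀ v : Var, ¬((v, true) ∈ C ∧ (v, false) ∈ C)

def clauseSat (a : Var → Bool) (C : Clause) : Prop := ∃ l ∈ C, a l.1 = l.2

def cnfSat (a : Var → Bool) (F : ClauseSet) : Prop := ∀ C ∈ F, clauseSat a C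

def sat (F : ClauseSet) : Prop := ∃ a : Var → Bool, cnfSat a F

/-- Application `φ * F` of a partial assignment: clauses containing a literal set to 1
are removed, and literals set to 0 are removed from the remaining clauses. -/
def applyPA (φ : Var → Option Bool) (F : ClauseSet) : ClauseSet :=
  (F.filter (fun C => ¬ ∃ l ∈ C, φ l.1 = some l.2)).image
    (fun C => C.filter (fun l => φ l.1 ≠ some (!l.2)))

/-- A partial assignment is an autarky for `F` iff every clause of `F` touched by it
contains a literal it satisfies. -/
def autarky (φ : Var → Option Bool) (F : ClauseSet) : Prop :=
  ∀ C ∈ F, (∃ l ∈ C, φ l.1 ≠ none) → ∃ l ∈ C, φ l.1 = some l.2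

/-- if `φ` is an autarky for `F`, then `F` is satisfiable iff `φ * F`
is satisfiable. -/
theorem stmt6 (F : ClauseSet) (hF : ∀ C ∈ F, isClause C)
    (φ : Var → Option Bool) (hfin : {v | φ v ≠ none}.Finite)
    (haut : autarky φ F) :
    sat F ↔ sat (applyPA φ F) := by
  have key : ∀ C ∈ F, ¬ (∃ l ∈ C, φ l.1 = some l.2) →
      ∀ l ∈ C, φ l.1 = none := by
    intro C hC hno l hl
    by_contra h
    exact hno (haut C hC ⟨l, hl, h⟩)
  have hsub : applyPA φ F ⊆ F := by
    intro D hD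
    rcases Finset.mem_image.mp hD with ⟨C, hC, rfl⟩
    rcases Finset.mem_filter.mp hC with ⟨hCF, hno⟩
    have : C.filter (fun l => φ l.1 ≠ some (!l.2)) = C := by
      apply Finset.filter_true_of_mem
      intro l hl
      simp [key C hCF hno l hl]
    rw [this]; exact hCF
  constructor
  · rintro ⟨a, ha⟩
    exact ⟨a, fun C hC => ha C (hsub hC)⟩
  · rintro ⟨a, ha⟩
    refine ⟨fun v => (φ v).getD (a v), ?_⟩
    intro C hC
    by_cases htouch : ∃ l ∈ C, φ l.1 ≠ none
    · rcases haut C hC htouch with ⟨l, hl, hsat⟩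
      exact ⟨l, hl, by simp [hsat]⟩
    · push_neg at htouch
      have hno : ¬ ∃ l ∈ C, φ l.1 = some l.2 := by
        rintro ⟨l, hl, h⟩
        rw [htouch l hl] at h
        cases h
      have hmem : C ∈ applyPA φ F := by
        have heq : C.filter (fun l => φ l.1 ≠ some (!l.2)) = C := by
          apply Finset.filter_true_of_mem
          intro l hl
          simp [htouch l hl]
        exact Finset.mem_image.mpr ⟨C, Finset.mem_filter.mpr ⟨hC, hno⟩, heq⟩
      rcases ha C hmem with ⟨l, hl, hsat⟩
      exact ⟨l, hl, by simp [htouch l hl, hsat]⟩
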